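/- Let H₁, H₂ be finite-dimensional complex Hilbert spaces with dim H₂ = n₂, let (T_i) be a basis of the space of operators on H₁, and (|k⟩⟨l|) the canonical basis of operators on H₂. Suppose U = ∑_{i,k,l} α_{ikl} T_i ⊗ |k⟩⟨l| is a unitary such that for all k,k',l,l' there is λ_{kk'll'} ∈ ℂ with (∑_i α_{ik'l'} T_i)† (∑_i α_{ikl} T_i) = λ_{kk'll'}·1. Then there exist an operator V on H₁ and scalars β_{kl} with α_{ikl} = β_{kl} α_{ik₀l₀} for some fixed (k₀,l₀), and U factorizes as U = U₁ ⊗ U₂ with U₁, U₂ unitary. -/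

import Mathlib

open Matrix Kronecker BigOperators
open scoped ComplexOrder

noncomputable section

/-- Partial trace over the first tensor factor. -/
def ptrace1 {n m : Type} [Fintype n] (ρ : Matrix (n × m) (n × m) ℂ) : Matrix m m ℂ :=
  Matrix.of fun k l => ∑ i, ρ (i, k) (i, l)

/-- A density matrix: positive semidefinite with trace one. -/
def IsDensityMatrix {d : Type} [Fintype d] [DecidableEq d] (ρ : Matrix d d ℂ) : Prop :=
  ρ.PosSemidef ∧ ρ.trace = 1

/-- A complete family of mutually orthogonal Hermitian projections. -/
def IsProjFamily {n ι : Type} [Fintype n] [DecidableEq n] [Fintype ι] [DecidableEq ι]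
    (P : ι → Matrix n n ℂ) : Prop :=
  (∀ i, (P i).IsHermitian) ∧ (∀ i j, P i * P j = if i = j then P i else 0) ∧ ∑ i, P i = 1

/-- `(P, μ)` is the spectral decomposition of the Hermitian operator `A`. -/
def IsSpectralDecomp {n ι : Type} [Fintype n] [DecidableEq n] [Fintype ι] [DecidableEq ι]
    (A : Matrix n n ℂ) (P : ι → Matrix n n ℂ) (μ : ι → ℝ) : Prop :=
  IsProjFamily P ∧ Function.Injective μ ∧ A = ∑ i, (μ i : ℂ) • P i

/-- If a unitary `U = ∑ α_{ikl} T_i ⊗ |k⟩⟨l|` is such that all the operators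
`(∑ᵢ α_{ik'l'} T_i)† (∑ᵢ α_{ikl} T_i)` are scalar multiples of the identity, then the
coefficients factorize (`α_{ikl} = β_{kl} α_{ik₀l₀}`) and `U = U₁ ⊗ U₂` with `U₁, U₂`
unitary. -/
theorem factorization_of_scalar_products
    (n m ι : Type) [Fintype n] [DecidableEq n] [Fintype m] [DecidableEq m]
    [Nonempty m] [Fintype ι]
    (T : ι → Matrix n n ℂ)
    (hT : LinearIndependent ℂ T ∧ Submodule.span ℂ (Set.range T) = ⊤)
    (α : ι → m → m → ℂ)
    (U : Matrix (n × m) (n × m) ℂ)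
    (hUdef : U = ∑ i, ∑ k, ∑ l,
      α i k l • (T i ⊗ₖ Matrix.single k l (1 : ℂ)))
    (hU : U ∈ Matrix.unitaryGroup (n × m) ℂ)
    (hscal : ∀ k k' l l' : m, ∃ lam : ℂ,
      (∑ i, α i k' l' • T i)ᴴ * (∑ i, α i k l • T i) = lam • (1 : Matrix n n ℂ)) :
    (∃ (k₀ l₀ : m) (β : m → m → ℂ), ∀ i k l, α i k l = β k l * α i k₀ l₀) ∧
    (∃ U₁ U₂, U₁ ∈ Matrix.unitaryGroup n ℂ ∧ U₂ ∈ Matrix.unitaryGroup m ℂ ∧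
      U = U₁ ⊗ₖ U₂) := by
  classical
  obtain ⟨hTind, -⟩ := hT
  cases isEmpty_or_nonempty n with
  | inl hn =>
    have hι : IsEmpty ι := by
      by_contra h
      rw [not_isEmpty_iff] at h
      obtain ⟨i⟩ := h
      exact hTind.ne_zero i (Subsingleton.elim _ _)
    obtain ⟨k₀⟩ := (inferInstance : Nonempty m)
    refine ⟨⟨k₀, k₀, fun _ _ => 1, fun i => isEmptyElim i⟩,
      ⟨1, 1, Submonoid.one_mem _, Submonoid.one_mem _, ?_⟩⟩
    ext ⟨r, k⟩ ⟨s, l⟩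
    exact isEmptyElim r
  | inr hn =>
    obtain ⟨p⟩ := hn
    set S : m → m → Matrix n n ℂ := fun k l => ∑ i, α i k l • T i with hSdef
    choose lam hlam using hscal
    -- entry formula for U
    have hUentry : ∀ (r : n) (k : m) (s : n) (l : m), U (r, k) (s, l) = S k l r s := by
      intro r k s l
      subst hUdef
      simp only [Matrix.sum_apply, Matrix.smul_apply, Matrix.kroneckerMap_apply,
        Matrix.single, Matrix.of_apply, smul_eq_mul, hSdef]
      refine Finset.sum_congr rfl fun i _ => ?_
      rw [Finset.sum_eq_single k]
      · rw [Finset.sum_eq_single l]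
        · simp
        · intro b _ hb; simp [hb]
        · intro h; exact absurd (Finset.mem_univ l) h
      · intro b _ hb
        apply Finset.sum_eq_zero
        intro x _
        simp [hb]
      · intro h; exact absurd (Finset.mem_univ k) h
    have hUU : Uᴴ * U = 1 := by
      have := hU.1
      rwa [Matrix.star_eq_conjTranspose] at this
    -- extract scalar from smul-one equations
    have hext : ∀ x y : ℂ, x • (1 : Matrix n n ℂ) = y • 1 → x = y := by
      intro x y h
      have := congrFun (congrFun h p) p
      simpa using this
    -- lambda sum rule
    have hsum : ∀ l l' : m, ∑ k, lam k k l l' = if l' = l then 1 else 0 := by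
      intro l l'
      have h := congrFun (congrFun hUU (p, l')) (p, l)
      rw [Matrix.mul_apply] at h
      have hL : ∑ x : n × m, Uᴴ (p, l') x * U x (p, l) = ∑ k, lam k k l l' := by
        rw [Fintype.sum_prod_type, Finset.sum_comm]
        refine Finset.sum_congr rfl fun k _ => ?_
        have h2 := congrFun (congrFun (hlam k k l l') p) p
        simp only [Matrix.mul_apply, Matrix.conjTranspose_apply, Matrix.smul_apply,
          Matrix.one_apply_eq, smul_eq_mul, mul_one] at h2
        simp only [Matrix.mul_apply, Matrix.conjTranspose_apply]
        rw [← h2]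
        refine Finset.sum_congr rfl fun r _ => ?_
        simp [hUentry, hSdef]
      rw [hL] at h
      rw [h]
      simp [Matrix.one_apply, Prod.ext_iff]
    obtain ⟨l₀⟩ := (inferInstance : Nonempty m)
    have h1 : ∑ k, lam k k l₀ l₀ = 1 := by simpa using hsum l₀ l₀
    have hex : ∃ k₀, lam k₀ k₀ l₀ l₀ ≠ 0 := by
      by_contra h
      push_neg at h
      rw [Finset.sum_eq_zero (fun k _ => h k)] at h1
      exact one_ne_zero h1.symm
    obtain ⟨k₀, hc⟩ := hex
    set c : ℂ := lam k₀ k₀ l₀ l₀ with hcdef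
    set A : Matrix n n ℂ := S k₀ l₀ with hAdef
    have hAA : Aᴴ * A = c • 1 := hlam k₀ k₀ l₀ l₀
    have h1inv : (c⁻¹ • Aᴴ) * A = 1 := by
      rw [Matrix.smul_mul, hAA, smul_smul, inv_mul_cancel₀ hc, one_smul]
    have hinv : A * (c⁻¹ • Aᴴ) = 1 := mul_eq_one_comm.mpr h1inv
    have hAAt : A * Aᴴ = c • 1 := by
      have h4 : c • (A * (c⁻¹ • Aᴴ)) = c • (1 : Matrix n n ℂ) := by rw [hinv]
      rwa [mul_smul_comm, smul_smul, mul_inv_cancel₀ hc, one_smul] at h4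
    set β : m → m → ℂ := fun k l => c⁻¹ * lam k k₀ l l₀ with hβdef
    have hSβ : ∀ k l, S k l = β k l • A := by
      intro k l
      have h3 : Aᴴ * S k l = lam k k₀ l l₀ • 1 := hlam k k₀ l l₀
      calc S k l = (c⁻¹ • (A * Aᴴ)) * S k l := by
            rw [hAAt, smul_smul, inv_mul_cancel₀ hc, one_smul, Matrix.one_mul]
        _ = c⁻¹ • (A * (Aᴴ * S k l)) := by rw [Matrix.smul_mul, Matrix.mul_assoc]
        _ = c⁻¹ • (A * (lam k k₀ l l₀ • 1)) := by rw [h3]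
        _ = β k l • A := by
            rw [mul_smul_comm, Matrix.mul_one, smul_smul]
    refine ⟨⟨k₀, l₀, β, fun i k l => ?_⟩, ?_⟩
    · have h5 : (∑ j, α j k l • T j) = β k l • ∑ j, α j k₀ l₀ • T j := hSβ k l
      have h0 : ∑ j, (α j k l - β k l * α j k₀ l₀) • T j = 0 := by
        simp only [sub_smul, mul_smul, Finset.sum_sub_distrib]
        rw [h5, Finset.smul_sum]
        simp
      exact sub_eq_zero.mp (Fintype.linearIndependent_iff.mp hTind _ h0 i)
    · -- second part
      set B : Matrix m m ℂ := Matrix.of fun k l => β k l with hBdef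
      have hUAB : U = A ⊗ₖ B := by
        ext ⟨r, k⟩ ⟨s, l⟩
        rw [hUentry, hSβ]
        simp [hBdef, Matrix.kroneckerMap_apply, mul_comm]
      have hscalar : ∀ k l l', star (β k l') * β k l * c = lam k k l l' := by
        intro k l l'
        have h := hlam k k l l'
        have h' : (S k l')ᴴ * S k l = lam k k l l' • 1 := h
        rw [hSβ k l, hSβ k l'] at h'
        rw [Matrix.conjTranspose_smul, Matrix.smul_mul, mul_smul_comm, hAA,
          smul_smul, smul_smul] at h'
        exact hext _ _ h'
      have hBB : Bᴴ * B = c⁻¹ • 1 := by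
        ext l' l
        rw [Matrix.mul_apply]
        have hterm : ∀ k, Bᴴ l' k * B k l = c⁻¹ * lam k k l l' := by
          intro k
          rw [← hscalar k l l']
          simp only [Matrix.conjTranspose_apply, hBdef, Matrix.of_apply]
          field_simp
        rw [Finset.sum_congr rfl fun k _ => hterm k, ← Finset.mul_sum, hsum]
        by_cases hll : l' = l <;> simp [hll, Matrix.one_apply]
      -- c is a positive real
      have hcs : ∃ s : ℝ, 0 ≤ s ∧ c = (s : ℂ) := by
        refine ⟨∑ r, Complex.normSq (A r p), Finset.sum_nonneg fun r _ => Complex.normSq_nonneg _, ?_⟩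
        have h3 := congrFun (congrFun hAA p) p
        simp only [Matrix.mul_apply, Matrix.conjTranspose_apply, Matrix.smul_apply,
          Matrix.one_apply_eq, smul_eq_mul, mul_one] at h3
        rw [← h3]
        push_cast
        refine Finset.sum_congr rfl fun r _ => ?_
        rw [Complex.star_def]
        exact (Complex.normSq_eq_conj_mul_self).symm
      obtain ⟨s, hs0, hcseq⟩ := hcs
      have hsne : s ≠ 0 := by
        intro h; apply hc; rw [hcseq, h]; simp
      set t : ℝ := Real.sqrt s with htdef
      have ht2 : (t : ℂ) * (t : ℂ) = c := by
        rw [hcseq]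
        norm_cast
        exact Real.mul_self_sqrt hs0
      have htne : (t : ℂ) ≠ 0 := by
        simp only [ne_eq, Complex.ofReal_eq_zero, htdef]
        exact Real.sqrt_ne_zero'.mpr (lt_of_le_of_ne hs0 (Ne.symm hsne))
      refine ⟨(t : ℂ)⁻¹ • A, (t : ℂ) • B, ?_, ?_, ?_⟩
      · rw [Matrix.mem_unitaryGroup_iff']
        rw [star_smul, Matrix.star_eq_conjTranspose, Matrix.smul_mul, mul_smul_comm,
          hAA, smul_smul, smul_smul]
        have : star (t : ℂ)⁻¹ * (t : ℂ)⁻¹ * c = 1 := by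
          rw [star_inv₀, Complex.star_def, Complex.conj_ofReal, ← ht2]
          field_simp
        rw [this, one_smul]
      · rw [Matrix.mem_unitaryGroup_iff']
        rw [star_smul, Matrix.star_eq_conjTranspose, Matrix.smul_mul, mul_smul_comm,
          hBB, smul_smul, smul_smul]
        have : star (t : ℂ) * (t : ℂ) * c⁻¹ = 1 := by
          rw [Complex.star_def, Complex.conj_ofReal, ht2, mul_inv_cancel₀ hc]
        rw [this, one_smul]
      · rw [hUAB, Matrix.smul_kronecker, Matrix.kronecker_smul, smul_smul,
          inv_mul_cancel₀ htne, one_smul]
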